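/- Let A be a nonnegative real square matrix indexed by Σ i : Fin k, Fin (s i) (with s i ≥ 1 for all i, square diagonal blocks) and B a nonnegative real square matrix indexed by Σ i : Fin l, Fin (t i) (with t i ≥ 1 for all i, square diagonal blocks), where k and l may differ. Let A↑ be the k×k matrix of maximum block row sums of A and B↓ the l×l matrix of minimum block row sums of B. If ρ(A↑) ≤ ρ(B↓), then ρ(A) ≤ ρ(B). -/

import Mathlib

open Matrix

/-- Spectral radius of a real square matrix: the maximum of the moduli of its
complex eigenvalues (elements of the spectrum of the matrix over `ℂ`). -/
noncomputable def specRad {n : Type*} [Fintype n] [DecidableEq n]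
    (M : Matrix n n ℝ) : ℝ :=
  sSup ((fun z : ℂ => ‖z‖) '' spectrum ℂ (M.map (algebraMap ℝ ℂ)))

section Aux

open Filter

variable {n : Type*} [Fintype n] [DecidableEq n] [Nonempty n]

attribute [local instance] Matrix.linftyOpNormedAddCommGroup Matrix.linftyOpNormedRing
  Matrix.linftyOpNormedAlgebra

noncomputable instance matrixLinftyCompleteSpaceAux : CompleteSpace (Matrix n n ℂ) :=
  FiniteDimensional.complete ℂ (Matrix n n ℂ)

set_option linter.unusedSectionVars false in
/-- From membership in the spectrum of a complex matrix, extract an eigenvector. -/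
theorem exists_eigvec_aux (a : Matrix n n ℂ) (μ : ℂ) (h : μ ∈ spectrum ℂ a) :
    ∃ x : n → ℂ, x ≠ 0 ∧ a *ᵥ x = μ • x := by
  rw [← AlgEquiv.spectrum_eq (Matrix.toLinAlgEquiv' : Matrix n n ℂ ≃ₐ[ℂ] _)] at h
  obtain ⟨x, hx⟩ := (Module.End.hasEigenvalue_iff_mem_spectrum.mpr h).exists_hasEigenvector
  exact ⟨x, hx.2, by simpa [Matrix.toLinAlgEquiv'_apply] using hx.apply_eq_smul⟩

/-- To bound the spectral radius, bound every eigenvalue modulus. -/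
theorem specRad_le_of_forall_aux (M : Matrix n n ℝ) {r : ℝ}
    (h : ∀ μ ∈ spectrum ℂ (M.map (algebraMap ℝ ℂ)), ‖μ‖ ≤ r) :
    specRad M ≤ r := by
  refine csSup_le ((spectrum.nonempty _).image _) ?_
  rintro x ⟨μ, hμ, rfl⟩
  exact h μ hμ

/-- Subinvariance bound: if `M ≥ 0`, `c ≥ 0`, `z ≥ 0` nonzero and `c • z ≤ M z`
entrywise, then `c ≤ ρ(M)`. -/
theorem le_specRad_of_subinvariant (M : Matrix n n ℝ) (hM : ∀ p q, 0 ≤ M p q) {c : ℝ}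
    (hc : 0 ≤ c) {z : n → ℝ} (hz : ∀ p, 0 ≤ z p) (hz0 : z ≠ 0)
    (hMz : ∀ p, c * z p ≤ (M *ᵥ z) p) : c ≤ specRad M := by
  set a : Matrix n n ℂ := M.map (algebraMap ℝ ℂ) with ha
  have hMv : ∀ (N : Matrix n n ℝ) (w : n → ℝ) p, (N *ᵥ w) p = ∑ q, N p q * w q := by
    intro N w p; simp [Matrix.mulVec, dotProduct]
  have key : ∀ m : ℕ, ∀ p, c ^ m * z p ≤ ((M ^ m) *ᵥ z) p := by
    intro m
    induction m with
    | zero => intro p; simp [Matrix.one_mulVec]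
    | succ m ih =>
      intro p
      have h1 : (M ^ (m + 1)) *ᵥ z = M *ᵥ ((M ^ m) *ᵥ z) := by
        rw [pow_succ', Matrix.mulVec_mulVec]
      rw [h1]
      calc c ^ (m + 1) * z p = c ^ m * (c * z p) := by ring
        _ ≤ c ^ m * (M *ᵥ z) p :=
            mul_le_mul_of_nonneg_left (hMz p) (pow_nonneg hc m)
        _ = ∑ q, M p q * (c ^ m * z q) := by
            rw [hMv, Finset.mul_sum]; exact Finset.sum_congr rfl fun q _ => by ring
        _ ≤ ∑ q, M p q * ((M ^ m) *ᵥ z) q :=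
            Finset.sum_le_sum fun q _ => mul_le_mul_of_nonneg_left (ih q) (hM p q)
        _ = (M *ᵥ ((M ^ m) *ᵥ z)) p := (hMv _ _ _).symm
  obtain ⟨i, hi⟩ : ∃ i, 0 < z i := by
    by_contra h
    push_neg at h
    exact hz0 (funext fun p => le_antisymm (h p) (hz p))
  have hznorm : 0 < ‖z‖ := norm_pos_iff.mpr hz0
  have hq : 0 < z i / ‖z‖ := div_pos hi hznorm
  have hbound : ∀ m : ℕ, c ^ m * (z i / ‖z‖) ≤ ‖M ^ m‖ := by
    intro m
    rw [← mul_div_assoc, div_le_iff₀ hznorm]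
    calc c ^ m * z i ≤ ((M ^ m) *ᵥ z) i := key m i
      _ ≤ ‖((M ^ m) *ᵥ z) i‖ := le_abs_self _
      _ ≤ ‖(M ^ m) *ᵥ z‖ := norm_le_pi_norm _ i
      _ ≤ ‖M ^ m‖ * ‖z‖ := Matrix.linfty_opNorm_mulVec _ _
  have hmapnorm : ∀ N : Matrix n n ℝ, ‖N.map (algebraMap ℝ ℂ)‖₊ = ‖N‖₊ := by
    intro N; simp [Matrix.linfty_opNNNorm_def, Matrix.map_apply]
  have hapow : ∀ m : ℕ, ‖a ^ m‖ = ‖M ^ m‖ := by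
    intro m
    have : a ^ m = (M ^ m).map (algebraMap ℝ ℂ) := by
      rw [ha, ← RingHom.mapMatrix_apply, ← RingHom.mapMatrix_apply, map_pow]
    rw [this, ← coe_nnnorm, hmapnorm, coe_nnnorm]
  have hL : spectralRadius ℂ a ≠ ⊤ :=
    ne_of_lt ((spectrum.spectralRadius_le_nnnorm a).trans_lt ENNReal.coe_lt_top)
  have hG := spectrum.pow_nnnorm_pow_one_div_tendsto_nhds_spectralRadius a
  have hGr : Tendsto (fun m : ℕ => ‖M ^ m‖ ^ (1 / (m : ℝ))) atTop
      (nhds (spectralRadius ℂ a).toReal) := by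
    have h2 := (ENNReal.tendsto_toReal hL).comp hG
    convert h2 using 2 with m
    rw [Function.comp_apply, ← ENNReal.toReal_rpow, ENNReal.coe_toReal, coe_nnnorm, hapow]
  have hgl : Tendsto (fun m : ℕ => c * (z i / ‖z‖) ^ (1 / (m : ℝ))) atTop (nhds c) := by
    have h1 : Tendsto (fun m : ℕ => (z i / ‖z‖) ^ (1 / (m : ℝ))) atTop
        (nhds ((z i / ‖z‖) ^ (0 : ℝ))) :=
      Filter.Tendsto.rpow tendsto_const_nhds tendsto_one_div_atTop_nhds_zero_nat
        (Or.inl (ne_of_gt hq))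
    rw [Real.rpow_zero] at h1
    simpa using tendsto_const_nhds.mul h1
  have hev : ∀ᶠ m : ℕ in atTop,
      c * (z i / ‖z‖) ^ (1 / (m : ℝ)) ≤ ‖M ^ m‖ ^ (1 / (m : ℝ)) := by
    filter_upwards [Filter.eventually_ge_atTop 1] with m hm
    have hm0 : (m : ℝ) ≠ 0 := Nat.cast_ne_zero.mpr (by omega)
    calc c * (z i / ‖z‖) ^ (1 / (m : ℝ))
        = (c ^ m) ^ (1 / (m : ℝ)) * (z i / ‖z‖) ^ (1 / (m : ℝ)) := by
          rw [← Real.rpow_natCast c m, ← Real.rpow_mul hc,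
            mul_one_div, div_self hm0, Real.rpow_one]
      _ = (c ^ m * (z i / ‖z‖)) ^ (1 / (m : ℝ)) :=
          (Real.mul_rpow (pow_nonneg hc m) hq.le).symm
      _ ≤ ‖M ^ m‖ ^ (1 / (m : ℝ)) :=
          Real.rpow_le_rpow (mul_nonneg (pow_nonneg hc m) hq.le) (hbound m) (by positivity)
  have hc_le : c ≤ (spectralRadius ℂ a).toReal := le_of_tendsto_of_tendsto hgl hGr hev
  refine hc_le.trans ?_
  have hbdd : BddAbove ((fun z : ℂ => ‖z‖) '' spectrum ℂ a) :=
    ((Matrix.finite_spectrum a).image _).bddAbove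
  have h0 : 0 ≤ specRad M := by
    obtain ⟨μ, hμ⟩ := spectrum.nonempty a
    exact (norm_nonneg μ).trans (le_csSup hbdd ⟨μ, hμ, rfl⟩)
  have hsup : spectralRadius ℂ a ≤ ENNReal.ofReal (specRad M) := by
    rw [spectralRadius]
    refine iSup₂_le fun μ hμ => ?_
    rw [← enorm_eq_nnnorm, ← ofReal_norm]
    exact ENNReal.ofReal_le_ofReal (le_csSup hbdd ⟨μ, hμ, by simp⟩)
  calc (spectralRadius ℂ a).toReal ≤ (ENNReal.ofReal (specRad M)).toReal :=
        ENNReal.toReal_mono ENNReal.ofReal_ne_top hsup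
    _ = specRad M := ENNReal.toReal_ofReal h0

end Aux

/-- Comparison of spectral radii via block row sum contractions of possibly
different sizes: if the spectral radius of the upward row sum contraction of `A`
is at most that of the downward row sum contraction of `B`, then
`ρ(A) ≤ ρ(B)`. -/
theorem specRad_le_of_specRad_contraction_le
    {k l : ℕ} (hk : 1 ≤ k) (hl : 1 ≤ l)
    (s : Fin k → ℕ) (t : Fin l → ℕ)
    (hs : ∀ i, 1 ≤ s i) (ht : ∀ i, 1 ≤ t i)
    (A : Matrix (Σ i, Fin (s i)) (Σ i, Fin (s i)) ℝ)
    (hA : ∀ p q, 0 ≤ A p q)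
    (B : Matrix (Σ i, Fin (t i)) (Σ i, Fin (t i)) ℝ)
    (hB : ∀ p q, 0 ≤ B p q)
    (hle : specRad (Matrix.of fun (i j : Fin k) =>
        Finset.univ.sup'
          (Finset.univ_nonempty_iff.mpr (Fin.pos_iff_nonempty.mp (hs i)))
          (fun u : Fin (s i) => ∑ v : Fin (s j), A ⟨i, u⟩ ⟨j, v⟩)) ≤
      specRad (Matrix.of fun (i j : Fin l) =>
        Finset.univ.inf'
          (Finset.univ_nonempty_iff.mpr (Fin.pos_iff_nonempty.mp (ht i)))
          (fun u : Fin (t i) => ∑ v : Fin (t j), B ⟨i, u⟩ ⟨j, v⟩))) :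
    specRad A ≤ specRad B := by
  haveI : Nonempty (Fin k) := ⟨⟨0, hk⟩⟩
  haveI : Nonempty (Fin l) := ⟨⟨0, hl⟩⟩
  haveI : ∀ i : Fin k, Nonempty (Fin (s i)) := fun i => ⟨⟨0, hs i⟩⟩
  haveI : ∀ i : Fin l, Nonempty (Fin (t i)) := fun i => ⟨⟨0, ht i⟩⟩
  haveI : Nonempty (Σ i, Fin (s i)) := ⟨⟨⟨0, hk⟩, ⟨0, hs _⟩⟩⟩
  haveI : Nonempty (Σ i, Fin (t i)) := ⟨⟨⟨0, hl⟩, ⟨0, ht _⟩⟩⟩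
  set AU : Matrix (Fin k) (Fin k) ℝ := Matrix.of fun (i j : Fin k) =>
      Finset.univ.sup'
        (Finset.univ_nonempty_iff.mpr (Fin.pos_iff_nonempty.mp (hs i)))
        (fun u : Fin (s i) => ∑ v : Fin (s j), A ⟨i, u⟩ ⟨j, v⟩) with hAU
  set BD : Matrix (Fin l) (Fin l) ℝ := Matrix.of fun (i j : Fin l) =>
      Finset.univ.inf'
        (Finset.univ_nonempty_iff.mpr (Fin.pos_iff_nonempty.mp (ht i)))
        (fun u : Fin (t i) => ∑ v : Fin (t j), B ⟨i, u⟩ ⟨j, v⟩) with hBD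
  have hAUapp : ∀ i j, AU i j =
      Finset.univ.sup'
        (Finset.univ_nonempty_iff.mpr (Fin.pos_iff_nonempty.mp (hs i)))
        (fun u : Fin (s i) => ∑ v : Fin (s j), A ⟨i, u⟩ ⟨j, v⟩) := fun i j => rfl
  have hBDapp : ∀ i j, BD i j =
      Finset.univ.inf'
        (Finset.univ_nonempty_iff.mpr (Fin.pos_iff_nonempty.mp (ht i)))
        (fun u : Fin (t i) => ∑ v : Fin (t j), B ⟨i, u⟩ ⟨j, v⟩) := fun i j => rfl
  -- Step 1 : specRad A ≤ specRad AU
  have step1 : specRad A ≤ specRad AU := by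
    refine specRad_le_of_forall_aux _ fun μ hμ => ?_
    obtain ⟨x, hx0, hax⟩ := exists_eigvec_aux _ μ hμ
    set z : Fin k → ℝ := fun i =>
      Finset.univ.sup'
        (Finset.univ_nonempty_iff.mpr (Fin.pos_iff_nonempty.mp (hs i)))
        (fun u : Fin (s i) => ‖x ⟨i, u⟩‖) with hzdef
    have hzge : ∀ (i : Fin k) (u : Fin (s i)), ‖x ⟨i, u⟩‖ ≤ z i := by
      intro i u
      simp only [hzdef]
      exact Finset.le_sup' (fun u : Fin (s i) => ‖x ⟨i, u⟩‖) (Finset.mem_univ u)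
    have hz : ∀ i, 0 ≤ z i := fun i =>
      le_trans (norm_nonneg (x ⟨i, ⟨0, hs i⟩⟩)) (hzge i ⟨0, hs i⟩)
    have hz0 : z ≠ 0 := by
      intro h0
      obtain ⟨p, hp⟩ := Function.ne_iff.mp hx0
      have h1 : 0 < ‖x p‖ := by
        simpa using (norm_pos_iff.mpr hp)
      have h2 : ‖x ⟨p.1, p.2⟩‖ ≤ z p.1 := hzge p.1 p.2
      rw [h0] at h2
      simp only [Pi.zero_apply, Sigma.eta] at h2
      exact absurd (h2.trans_lt' h1) (by simp)
    refine le_specRad_of_subinvariant AU ?_ (norm_nonneg μ) hz hz0 ?_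
    · intro i j
      rw [hAUapp]
      exact le_trans
        (Finset.sum_nonneg fun v _ => hA _ _)
        (Finset.le_sup' (fun u : Fin (s i) => ∑ v : Fin (s j), A ⟨i, u⟩ ⟨j, v⟩)
          (Finset.mem_univ ⟨0, hs i⟩))
    · intro i
      obtain ⟨u, _, hu⟩ := Finset.exists_mem_eq_sup' (α := ℝ)
        (Finset.univ_nonempty_iff.mpr (Fin.pos_iff_nonempty.mp (hs i)))
        (fun u : Fin (s i) => ‖x ⟨i, u⟩‖)
      have hzi : z i = ‖x ⟨i, u⟩‖ := hu
      have hmv : (AU *ᵥ z) i = ∑ j, AU i j * z j := by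
        simp [Matrix.mulVec, dotProduct]
      rw [hmv, hzi]
      calc ‖μ‖ * ‖x ⟨i, u⟩‖
          = ‖μ * x ⟨i, u⟩‖ := (norm_mul _ _).symm
        _ = ‖((A.map (algebraMap ℝ ℂ)) *ᵥ x) ⟨i, u⟩‖ := by
            rw [hax]; simp
        _ = ‖∑ q, (A.map (algebraMap ℝ ℂ)) ⟨i, u⟩ q * x q‖ := by
            simp [Matrix.mulVec, dotProduct]
        _ ≤ ∑ q, ‖(A.map (algebraMap ℝ ℂ)) ⟨i, u⟩ q * x q‖ :=
            norm_sum_le _ _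
        _ = ∑ q, A ⟨i, u⟩ q * ‖x q‖ := by
            refine Finset.sum_congr rfl fun q _ => ?_
            rw [norm_mul, Matrix.map_apply]
            simp [Complex.norm_real, abs_of_nonneg (hA _ q)]
        _ = ∑ j, ∑ v : Fin (s j), A ⟨i, u⟩ ⟨j, v⟩ * ‖x ⟨j, v⟩‖ := by
            rw [← Finset.univ_sigma_univ, Finset.sum_sigma]
        _ ≤ ∑ j, ∑ v : Fin (s j), A ⟨i, u⟩ ⟨j, v⟩ * z j :=
            Finset.sum_le_sum fun j _ => Finset.sum_le_sum fun v _ =>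
              mul_le_mul_of_nonneg_left (hzge j v) (hA _ _)
        _ = ∑ j, (∑ v : Fin (s j), A ⟨i, u⟩ ⟨j, v⟩) * z j := by
            refine Finset.sum_congr rfl fun j _ => ?_
            rw [Finset.sum_mul]
        _ ≤ ∑ j, AU i j * z j :=
            Finset.sum_le_sum fun j _ => mul_le_mul_of_nonneg_right
              (by rw [hAUapp]
                  exact Finset.le_sup' (fun u' : Fin (s i) => ∑ v : Fin (s j), A ⟨i, u'⟩ ⟨j, v⟩)
                    (Finset.mem_univ u))
              (hz j)
  -- Step 2 : specRad BD ≤ specRad B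
  have step2 : specRad BD ≤ specRad B := by
    refine specRad_le_of_forall_aux _ fun μ hμ => ?_
    obtain ⟨w, hw0, hbw⟩ := exists_eigvec_aux _ μ hμ
    set z : (Σ i, Fin (t i)) → ℝ := fun p => ‖w p.1‖ with hzdef
    have hz : ∀ p, 0 ≤ z p := fun p => norm_nonneg _
    have hz0 : z ≠ 0 := by
      intro h0
      obtain ⟨j, hj⟩ := Function.ne_iff.mp hw0
      have h1 : z ⟨j, ⟨0, ht j⟩⟩ = 0 := by rw [h0]; rfl
      exact (norm_pos_iff.mpr hj).ne' h1
    have hBDnn : ∀ i j, 0 ≤ BD i j := by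
      intro i j
      rw [hBDapp]
      exact Finset.le_inf' _ _ fun u _ => Finset.sum_nonneg fun v _ => hB _ _
    refine le_specRad_of_subinvariant B hB (norm_nonneg μ) hz hz0 ?_
    rintro ⟨i, u⟩
    have hmv : (B *ᵥ z) ⟨i, u⟩ = ∑ j, ∑ v : Fin (t j), B ⟨i, u⟩ ⟨j, v⟩ * ‖w j‖ := by
      simp only [Matrix.mulVec, dotProduct]
      rw [← Finset.univ_sigma_univ, Finset.sum_sigma]
    rw [hmv]
    calc ‖μ‖ * z ⟨i, u⟩
        = ‖μ * w i‖ := (norm_mul _ _).symm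
      _ = ‖((BD.map (algebraMap ℝ ℂ)) *ᵥ w) i‖ := by rw [hbw]; simp
      _ = ‖∑ j, (BD.map (algebraMap ℝ ℂ)) i j * w j‖ := by
          simp [Matrix.mulVec, dotProduct]
      _ ≤ ∑ j, ‖(BD.map (algebraMap ℝ ℂ)) i j * w j‖ :=
          norm_sum_le _ _
      _ = ∑ j, BD i j * ‖w j‖ := by
          refine Finset.sum_congr rfl fun j _ => ?_
          rw [norm_mul, Matrix.map_apply]
          simp [Complex.norm_real, abs_of_nonneg (hBDnn i j)]
      _ ≤ ∑ j, (∑ v : Fin (t j), B ⟨i, u⟩ ⟨j, v⟩) * ‖w j‖ :=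
          Finset.sum_le_sum fun j _ => mul_le_mul_of_nonneg_right
            (by rw [hBDapp]
                exact Finset.inf'_le (fun u' : Fin (t i) => ∑ v : Fin (t j), B ⟨i, u'⟩ ⟨j, v⟩)
                  (Finset.mem_univ u))
            (norm_nonneg _)
      _ = ∑ j, ∑ v : Fin (t j), B ⟨i, u⟩ ⟨j, v⟩ * ‖w j‖ := by
          refine Finset.sum_congr rfl fun j _ => ?_
          rw [Finset.sum_mul]
  exact step1.trans (hle.trans step2)
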